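/- The characteristic polynomial of the 3×3 matrix with rows (−R_0, 0, R_m/(1+βV)² − 1), (α₁V, −α₁, α₁), (0, α₂, −α₂) is η³ + d₂η² + d₁η + d₀ with d₂ = α₁+α₂+R_0, d₁ = (α₁+α₂)R_0, and d₀ = (α₁α₂V/(1+βV)²)·((1+βV)² − R_m). -/

import Mathlib

open Polynomial

theorem charpoly_infected (a1 a2 beta R0 Rm V : ℝ) (hden : 1 + beta * V ≠ 0) :
    (Matrix.of ![![-R0, 0, Rm / (1 + beta * V) ^ 2 - 1],
                 ![a1 * V, -a1, a1],
                 ![0, a2, -a2]] : Matrix (Fin 3) (Fin 3) ℝ).charpoly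
      = X ^ 3 + C (a1 + a2 + R0) * X ^ 2 + C ((a1 + a2) * R0) * X
          + C ((a1 * a2 * V / (1 + beta * V) ^ 2) * ((1 + beta * V) ^ 2 - Rm)) := by
  have hr : (a1 * a2 * V / (1 + beta * V) ^ 2) * ((1 + beta * V) ^ 2 - Rm)
      = a1 * a2 * V * (1 - Rm / (1 + beta * V) ^ 2) := by
    field_simp
    have h : 1 + V * beta ≠ 0 := by rwa [mul_comm V beta]
    field_simp
  rw [hr]
  rw [Matrix.charpoly, Matrix.det_fin_three]
  simp only [Matrix.charmatrix_apply, Matrix.of_apply, Matrix.cons_val', Matrix.cons_val_zero,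
    Matrix.cons_val_one, Matrix.head_cons, Matrix.cons_val_fin_one, Matrix.empty_val',
    Matrix.cons_val_two, Matrix.tail_cons, Matrix.head_fin_const, Matrix.one_apply,
    Matrix.diagonal_apply, if_true, if_false, Fin.isValue, ne_eq, Matrix.smul_apply,
    smul_eq_mul]
  generalize Rm / (1 + beta * V) ^ 2 = r
  simp [Matrix.charmatrix_apply, Matrix.one_apply, C_mul, C_add, C_sub, C_1]
  ring
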